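/- With I_{kl}(q) = q_{kl}/SINR_{kl}(q) as above, for every α > 1 and componentwise-positive q, one has I_{kl}(αq) < α I_{kl}(q), i.e., I_{kl} is a scalable (hence standard) interference function. -/

import Mathlib

open Matrix Finset

variable {K L : ℕ}

/-- The noise-plus-interference diagonal entries `λ_{jk}(q)`. -/
noncomputable def lamDiag (β : Fin L → Fin K → Fin L → ℝ) (p : Fin K → Fin L → ℝ)
    (k : Fin K) (q : Fin K → Fin L → ℝ) : Fin L → ℝ :=
  fun j => (1 + ∑ i, β j k i * p k i) * (1 + ∑ n, ∑ m, β j m n * q m n)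

/-- The denominator matrix `∑_{n≠l} β_{kn} β_{kn}ᴴ p_{kn} q_{kn} M + Λ_k(q)`. -/
noncomputable def denomMat (β : Fin L → Fin K → Fin L → ℝ) (p : Fin K → Fin L → ℝ)
    (M : ℝ) (k : Fin K) (l : Fin L) (q : Fin K → Fin L → ℝ) :
    Matrix (Fin L) (Fin L) ℝ :=
  ∑ n ∈ univ.erase l,
    (p k n * q k n * M) • vecMulVec (fun j => β j k n) (fun j => β j k n) +
  diagonal (lamDiag β p k q)

/-- The interference function `I_{kl}(q) = q_{kl}/SINR_{kl}(q)
  = 1/(p_{kl} M · β_{kl}ᴴ (denomMat q)⁻¹ β_{kl})`. -/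
noncomputable def interfFun (β : Fin L → Fin K → Fin L → ℝ) (p : Fin K → Fin L → ℝ)
    (M : ℝ) (k : Fin K) (l : Fin L) (q : Fin K → Fin L → ℝ) : ℝ :=
  1 / (p k l * M *
    ((fun j => β j k l) ⬝ᵥ (denomMat β p M k l q)⁻¹ *ᵥ (fun j => β j k l)))

section auxLemmas

variable {n : Type*} [Fintype n] [DecidableEq n]

set_option linter.unusedSectionVars false

/-- A nonnegative multiple of `u uᵀ` is positive semidefinite. -/
lemma psd_smul_vecMulVec {c : ℝ} (hc : 0 ≤ c) (u : n → ℝ) :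
    (c • vecMulVec u u).PosSemidef := by
  refine Matrix.PosSemidef.of_dotProduct_mulVec_nonneg ?_ ?_
  · unfold Matrix.IsHermitian
    ext i j
    simp [vecMulVec, mul_comm]
  · intro x
    have h1 : (c • vecMulVec u u) *ᵥ x = fun i => c * (u i * (u ⬝ᵥ x)) := by
      funext i
      simp [vecMulVec, mulVec, dotProduct, Finset.mul_sum, mul_assoc]
    rw [h1]
    have h2 : star x ⬝ᵥ (fun i => c * (u i * (u ⬝ᵥ x))) = c * ((u ⬝ᵥ x) * (u ⬝ᵥ x)) := by
      have h3 : x ⬝ᵥ (fun i => c * (u i * (u ⬝ᵥ x))) = (x ⬝ᵥ u) * (c * (u ⬝ᵥ x)) := by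
        simp only [dotProduct, Finset.sum_mul]
        exact Finset.sum_congr rfl fun i _ => by ring
      rw [star_trivial, h3, dotProduct_comm x u]
      ring
    rw [h2]
    exact mul_nonneg hc (mul_self_nonneg _)

/-- Symmetric pairing: `u ⬝ᵥ A *ᵥ w = (A *ᵥ u) ⬝ᵥ w` for symmetric real `A`. -/
lemma dot_mulVec_symm {A : Matrix n n ℝ} (hA : A.IsHermitian) (u w : n → ℝ) :
    u ⬝ᵥ A *ᵥ w = (A *ᵥ u) ⬝ᵥ w := by
  rw [dotProduct_mulVec, ← mulVec_transpose,
    ← conjTranspose_eq_transpose_of_trivial, hA.eq]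

/-- Key Loewner-type lemma: if `A`, `B`, and `B - A` are positive definite, then
`vᵀ B⁻¹ v < vᵀ A⁻¹ v` for `v ≠ 0`. -/
lemma quad_inv_lt {A B : Matrix n n ℝ} (hA : A.PosDef) (hB : B.PosDef)
    (hD : (B - A).PosDef) {v : n → ℝ} (hv : v ≠ 0) :
    v ⬝ᵥ B⁻¹ *ᵥ v < v ⬝ᵥ A⁻¹ *ᵥ v := by
  have hAu := hA.isUnit
  have hBu := hB.isUnit
  set x : n → ℝ := B⁻¹ *ᵥ v with hx
  have hvx : B *ᵥ x = v := by
    rw [hx, mulVec_mulVec, Matrix.mul_nonsing_inv _ ((isUnit_iff_isUnit_det _).1 hBu),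
      one_mulVec]
  have hx0 : x ≠ 0 := by
    intro h
    apply hv
    rw [← hvx, h, mulVec_zero]
  have e1 : v ⬝ᵥ B⁻¹ *ᵥ v = x ⬝ᵥ B *ᵥ x := by
    rw [← hx, ← hvx, dot_mulVec_symm hB.isHermitian x x, dotProduct_comm]
  have e2 : v ⬝ᵥ x = x ⬝ᵥ B *ᵥ x := by
    rw [← hvx, dotProduct_comm, dot_mulVec_symm hB.isHermitian]
  set w : n → ℝ := A⁻¹ *ᵥ v - x with hw
  have hAAi : A *ᵥ (A⁻¹ *ᵥ v) = v := by
    rw [mulVec_mulVec, Matrix.mul_nonsing_inv _ ((isUnit_iff_isUnit_det _).1 hAu),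
      one_mulVec]
  have hwq : 0 ≤ w ⬝ᵥ A *ᵥ w := by
    simpa using hA.posSemidef.dotProduct_mulVec_nonneg w
  have e3 : w ⬝ᵥ A *ᵥ w =
      v ⬝ᵥ A⁻¹ *ᵥ v - 2 * (v ⬝ᵥ x) + x ⬝ᵥ A *ᵥ x := by
    have hAw : A *ᵥ w = v - A *ᵥ x := by
      rw [hw, mulVec_sub, hAAi]
    rw [hAw, hw, sub_dotProduct, dotProduct_sub, dotProduct_sub]
    have c1 : (A⁻¹ *ᵥ v) ⬝ᵥ v = v ⬝ᵥ A⁻¹ *ᵥ v := dotProduct_comm _ _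
    have c2 : (A⁻¹ *ᵥ v) ⬝ᵥ (A *ᵥ x) = v ⬝ᵥ x := by
      rw [← dot_mulVec_symm hA.isHermitian.inv, mulVec_mulVec,
        Matrix.nonsing_inv_mul _ ((isUnit_iff_isUnit_det _).1 hAu), one_mulVec]
    have c3 : x ⬝ᵥ v = v ⬝ᵥ x := dotProduct_comm _ _
    rw [c1, c2, c3]
    ring
  have hDx : 0 < x ⬝ᵥ (B - A) *ᵥ x := by simpa using hD.dotProduct_mulVec_pos hx0
  have e4 : x ⬝ᵥ (B - A) *ᵥ x = x ⬝ᵥ B *ᵥ x - x ⬝ᵥ A *ᵥ x := by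
    rw [sub_mulVec, dotProduct_sub]
  rw [e2] at e3
  rw [e3] at hwq
  rw [e4] at hDx
  rw [e1]
  linarith

end auxLemmas

/-- The diagonal entries `λ_{jk}(q)` are positive. -/
lemma lamDiag_pos (β : Fin L → Fin K → Fin L → ℝ) (hβ : ∀ j m n, 0 < β j m n)
    (p : Fin K → Fin L → ℝ) (hp : ∀ m n, 0 < p m n) (k : Fin K)
    (q : Fin K → Fin L → ℝ) (hq : ∀ m n, 0 ≤ q m n) (j : Fin L) :
    0 < lamDiag β p k q j := by
  unfold lamDiag
  have h1 : (0:ℝ) ≤ ∑ i, β j k i * p k i :=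
    Finset.sum_nonneg fun i _ => (mul_pos (hβ _ _ _) (hp _ _)).le
  have h2 : (0:ℝ) ≤ ∑ n, ∑ m, β j m n * q m n :=
    Finset.sum_nonneg fun n _ => Finset.sum_nonneg fun m _ =>
      mul_nonneg (hβ _ _ _).le (hq _ _)
  nlinarith

/-- The denominator matrix is positive definite. -/
lemma denomMat_posDef (β : Fin L → Fin K → Fin L → ℝ) (hβ : ∀ j m n, 0 < β j m n)
    (p : Fin K → Fin L → ℝ) (hp : ∀ m n, 0 < p m n) {M : ℝ} (hM : 0 < M)
    (k : Fin K) (l : Fin L) (q : Fin K → Fin L → ℝ) (hq : ∀ m n, 0 < q m n) :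
    (denomMat β p M k l q).PosDef := by
  unfold denomMat
  refine Matrix.PosDef.posSemidef_add ?_ (Matrix.PosDef.diagonal
    (lamDiag_pos β hβ p hp k q (fun m n => (hq m n).le)))
  refine Finset.sum_induction _ _ (fun a b ha hb => ha.add hb) Matrix.PosSemidef.zero ?_
  intro i _
  exact psd_smul_vecMulVec (mul_nonneg (mul_nonneg (hp k i).le (hq k i).le) hM.le) _

/-- `α • denomMat q - denomMat (α • q)` is an explicit positive diagonal matrix. -/
lemma denomMat_scale_diff (β : Fin L → Fin K → Fin L → ℝ) (p : Fin K → Fin L → ℝ)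
    (M : ℝ) (k : Fin K) (l : Fin L) (q : Fin K → Fin L → ℝ) (α : ℝ) :
    α • denomMat β p M k l q - denomMat β p M k l (α • q)
      = diagonal (fun j => (1 + ∑ i, β j k i * p k i) * (α - 1)) := by
  unfold denomMat
  rw [smul_add]
  have hsum : α • (∑ n ∈ univ.erase l,
      (p k n * q k n * M) • vecMulVec (fun j => β j k n) (fun j => β j k n))
      = ∑ n ∈ univ.erase l,
      (p k n * (α • q) k n * M) • vecMulVec (fun j => β j k n) (fun j => β j k n) := by
    rw [Finset.smul_sum]
    refine Finset.sum_congr rfl fun n _ => ?_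
    rw [smul_smul]
    congr 1
    simp only [Pi.smul_apply, smul_eq_mul]
    ring
  rw [hsum, add_sub_add_left_eq_sub, ← Matrix.diagonal_smul, Matrix.diagonal_sub]
  apply congrArg diagonal
  funext j
  simp only [Pi.sub_apply, Pi.smul_apply, smul_eq_mul, lamDiag]
  have h : ∑ n, ∑ m, β j m n * (α * q m n) = α * ∑ n, ∑ m, β j m n * q m n := by
    rw [Finset.mul_sum]
    refine Finset.sum_congr rfl fun n _ => ?_
    rw [Finset.mul_sum]
    exact Finset.sum_congr rfl fun m _ => by ring
  rw [h]
  ring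


/-- Scalability of `I_{kl}`: for every `α > 1` and componentwise-positive `q`,
`I_{kl}(α q) < α I_{kl}(q)`; hence `I_{kl}` is a standard interference function. -/
theorem stmt_15 (β : Fin L → Fin K → Fin L → ℝ) (hβ : ∀ j m n, 0 < β j m n)
    (p : Fin K → Fin L → ℝ) (hp : ∀ m n, 0 < p m n) (M : ℝ) (hM : 0 < M)
    (k : Fin K) (l : Fin L) :
    ∀ α : ℝ, 1 < α → ∀ q : Fin K → Fin L → ℝ, (∀ m n, 0 < q m n) →
      interfFun β p M k l (α • q) < α * interfFun β p M k l q := by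
  intro α hα q hq
  have hα0 : (0:ℝ) < α := lt_trans one_pos hα
  set v : Fin L → ℝ := fun j => β j k l with hv'
  have hv : v ≠ 0 := by
    intro h
    exact (hβ l k l).ne' (congrFun h l)
  have hqα : ∀ m n, 0 < (α • q) m n := fun m n => by
    simpa using mul_pos hα0 (hq m n)
  have hA : (denomMat β p M k l (α • q)).PosDef :=
    denomMat_posDef β hβ p hp hM k l _ hqα
  have hB0 : (denomMat β p M k l q).PosDef :=
    denomMat_posDef β hβ p hp hM k l q hq
  have hB : (α • denomMat β p M k l q).PosDef := by
    refine Matrix.PosDef.of_dotProduct_mulVec_pos ?_ ?_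
    · unfold Matrix.IsHermitian
      rw [conjTranspose_smul, hB0.isHermitian.eq]
      simp
    · intro x hx
      rw [smul_mulVec, dotProduct_smul, smul_eq_mul]
      exact mul_pos hα0 (hB0.dotProduct_mulVec_pos hx)
  have hD : (α • denomMat β p M k l q - denomMat β p M k l (α • q)).PosDef := by
    rw [denomMat_scale_diff]
    refine Matrix.PosDef.diagonal fun j => ?_
    have h1 : (0:ℝ) ≤ ∑ i, β j k i * p k i :=
      Finset.sum_nonneg fun i _ => (mul_pos (hβ _ _ _) (hp _ _)).le
    nlinarith
  have key := quad_inv_lt hA hB hD hv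
  have hinv : (α • denomMat β p M k l q)⁻¹ = α⁻¹ • (denomMat β p M k l q)⁻¹ := by
    apply Matrix.inv_eq_left_inv
    rw [Matrix.smul_mul, Matrix.mul_smul,
      Matrix.nonsing_inv_mul _ ((isUnit_iff_isUnit_det _).1 hB0.isUnit),
      smul_smul, inv_mul_cancel₀ hα0.ne', one_smul]
  rw [hinv, smul_mulVec, dotProduct_smul, smul_eq_mul] at key
  set X : ℝ := v ⬝ᵥ (denomMat β p M k l q)⁻¹ *ᵥ v with hX'
  set Xα : ℝ := v ⬝ᵥ (denomMat β p M k l (α • q))⁻¹ *ᵥ v with hXα'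
  have hX : 0 < X := by simpa using hB0.inv.dotProduct_mulVec_pos hv
  have hXα : 0 < Xα := lt_trans (by positivity) key
  have hpM : 0 < p k l * M := mul_pos (hp k l) hM
  show 1 / (p k l * M * Xα) < α * (1 / (p k l * M * X))
  rw [mul_one_div]
  rw [div_lt_div_iff₀ (by positivity) (by positivity)]
  have hXXα : X < α * Xα := by
    have := mul_lt_mul_of_pos_left key hα0
    rw [← mul_assoc, mul_inv_cancel₀ hα0.ne', one_mul] at this
    exact this
  nlinarith
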